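/- Let α : ℝ → ℝ be bijective and absolutely continuous with |α'| ≤ M a.e. and α(s) ≥ s for all s. Then for every ϱ > 0 the composition operator u ↦ u ∘ α^{-1} is bounded on H_{ϱ,0}(ℝ) with operator norm at most √M. -/

import Mathlib

open MeasureTheory Real Set
open scoped ENNReal NNReal

/-- Squared weighted norm integrand total: `∫ ‖f t‖² e^{-2ϱt} dt`. -/
noncomputable def wInt (ϱ : ℝ) {H : Type*} [NormedAddCommGroup H] (f : ℝ → H) : ℝ :=
  ∫ t : ℝ, ‖f t‖ ^ 2 * Real.exp (-2 * ϱ * t)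

/-- Membership in the weighted space `H_{ϱ,0}(ℝ; H)`. -/
def memW (ϱ : ℝ) {H : Type*} [NormedAddCommGroup H] (f : ℝ → H) : Prop :=
  AEStronglyMeasurable f volume ∧
    Integrable (fun t : ℝ => ‖f t‖ ^ 2 * Real.exp (-2 * ϱ * t))

/-- The weighted norm `|f|_{ϱ,0}`. -/
noncomputable def wNorm (ϱ : ℝ) {H : Type*} [NormedAddCommGroup H] (f : ℝ → H) : ℝ :=
  Real.sqrt (wInt ϱ f)

lemma ofReal_integrand {H : Type*} [NormedAddCommGroup H] (f : ℝ → H) (ϱ t : ℝ) :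
    ENNReal.ofReal (‖f t‖ ^ 2 * Real.exp (-2 * ϱ * t)) =
      (‖f t‖₊ : ℝ≥0∞) ^ 2 * ENNReal.ofReal (Real.exp (-2 * ϱ * t)) := by
  rw [ENNReal.ofReal_mul (by positivity), ENNReal.ofReal_pow (norm_nonneg _),
    ofReal_norm_eq_enorm, enorm_eq_nnnorm]

/-- Composition with `α⁻¹`, for `α` bijective, Lipschitz (equivalently absolutely
continuous with `|α'| ≤ M` a.e.) and `α(s) ≥ s`, is bounded on `H_{ϱ,0}(ℝ)` with
norm at most `√M`. -/
theorem stmt16 (M ϱ : ℝ) (hM : 0 ≤ M) (α : ℝ → ℝ)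
    (hbij : Function.Bijective α) (hlip : LipschitzWith (Real.toNNReal M) α)
    (hα : ∀ s : ℝ, s ≤ α s) (hϱ : 0 < ϱ) :
    ∀ u : ℝ → ℂ, memW ϱ u →
      memW ϱ (fun t => u (Function.invFun α t)) ∧
      wNorm ϱ (fun t => u (Function.invFun α t)) ≤ Real.sqrt M * wNorm ϱ u := by
  intro u hu
  obtain ⟨husm, huint⟩ := hu
  have hcont : Continuous α := hlip.continuous
  have hemb : MeasurableEmbedding α := hcont.measurableEmbedding hbij.1
  have hleft : Function.LeftInverse (Function.invFun α) α :=
    Function.leftInverse_invFun hbij.1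
  have hright : Function.RightInverse (Function.invFun α) α :=
    Function.rightInverse_invFun hbij.2
  -- preimage under invFun α = image under α
  have hpre : ∀ s : Set ℝ, Function.invFun α ⁻¹' s = α '' s := by
    intro s
    ext x
    constructor
    · intro hx
      exact ⟨Function.invFun α x, hx, hright x⟩
    · rintro ⟨y, hy, rfl⟩
      rwa [Set.mem_preimage, hleft y]
  -- Lipschitz image measure bound
  have hvol : ∀ s : Set ℝ, volume (α '' s) ≤ ENNReal.ofReal M * volume s := by
    intro s
    have := hlip.hausdorffMeasure_image_le (d := 1) zero_le_one s
    rw [hausdorffMeasure_real] at this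
    simpa [ENNReal.rpow_one, ENNReal.ofReal] using this
  -- invFun α is measurable
  have hminv : Measurable (Function.invFun α) := by
    intro s hs
    rw [hpre s]
    exact hemb.measurableSet_image.2 hs
  -- quasi measure preserving
  have hqmp : Measure.QuasiMeasurePreserving (Function.invFun α) volume volume := by
    refine ⟨hminv, Measure.AbsolutelyContinuous.mk fun s hs h0 => ?_⟩
    rw [Measure.map_apply hminv hs, hpre s]
    exact le_antisymm (by simpa [h0] using hvol s) bot_le
  have husm' : AEStronglyMeasurable (fun t => u (Function.invFun α t)) volume :=
    husm.comp_quasiMeasurePreserving hqmp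
  -- lintegral quantities
  set Lu : ℝ≥0∞ := ∫⁻ t : ℝ, (‖u t‖₊ : ℝ≥0∞) ^ 2 * ENNReal.ofReal (Real.exp (-2 * ϱ * t))
    with hLu
  set G : ℝ → ℝ≥0∞ := fun t =>
    (‖u (Function.invFun α t)‖₊ : ℝ≥0∞) ^ 2 * ENNReal.ofReal (Real.exp (-2 * ϱ * t)) with hG
  -- volume ≤ M • map α volume
  have hle : (volume : Measure ℝ) ≤ ENNReal.ofReal M • Measure.map α volume := by
    refine Measure.le_iff.2 fun E hE => ?_
    rw [Measure.smul_apply, smul_eq_mul, Measure.map_apply hcont.measurable hE]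
    calc volume E = volume (α '' (α ⁻¹' E)) := by rw [Set.image_preimage_eq E hbij.2]
      _ ≤ ENNReal.ofReal M * volume (α ⁻¹' E) := hvol _
  -- main lintegral estimate
  have hmain : ∫⁻ t : ℝ, G t ≤ ENNReal.ofReal M * Lu := by
    calc ∫⁻ t : ℝ, G t
        ≤ ∫⁻ t : ℝ, G t ∂(ENNReal.ofReal M • Measure.map α volume) :=
          lintegral_mono' hle le_rfl
      _ = ENNReal.ofReal M * ∫⁻ t : ℝ, G t ∂(Measure.map α volume) := by
          rw [lintegral_smul_measure, smul_eq_mul]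
      _ = ENNReal.ofReal M * ∫⁻ s : ℝ, G (α s) := by rw [hemb.lintegral_map]
      _ ≤ ENNReal.ofReal M * Lu := by
          gcongr
          refine lintegral_mono fun s => ?_
          simp only [hG, hleft s]
          exact mul_le_mul_right
            (ENNReal.ofReal_le_ofReal (Real.exp_le_exp.2 (by nlinarith [hα s]))) _
  -- finiteness of Lu and relation to wInt
  have hnn : (0:ℝ → ℝ) ≤ fun t => ‖u t‖ ^ 2 * Real.exp (-2 * ϱ * t) :=
    fun t => by positivity
  have hLu_eq : Lu = ∫⁻ t : ℝ, ENNReal.ofReal (‖u t‖ ^ 2 * Real.exp (-2 * ϱ * t)) := by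
    simp only [hLu, ofReal_integrand]
  have hLu_lt : Lu < ⊤ := by rw [hLu_eq]; exact huint.lintegral_lt_top
  have hwInt_u : wInt ϱ u = Lu.toReal := by
    rw [wInt, integral_eq_lintegral_of_nonneg_ae (Filter.Eventually.of_forall hnn)
      huint.aestronglyMeasurable, hLu_eq]
  have hG_eq : ∫⁻ t : ℝ, G t =
      ∫⁻ t : ℝ, ENNReal.ofReal (‖u (Function.invFun α t)‖ ^ 2 * Real.exp (-2 * ϱ * t)) := by
    simp only [hG, ofReal_integrand (fun t => u (Function.invFun α t))]
  have hG_lt : ∫⁻ t : ℝ, G t < ⊤ :=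
    lt_of_le_of_lt hmain (ENNReal.mul_lt_top ENNReal.ofReal_lt_top hLu_lt)
  -- integrability of the composed integrand
  have hcomp_sm : AEStronglyMeasurable
      (fun t : ℝ => ‖u (Function.invFun α t)‖ ^ 2 * Real.exp (-2 * ϱ * t)) volume := by
    exact ((husm'.norm.pow 2).mul
      (Real.continuous_exp.comp (by fun_prop)).aestronglyMeasurable)
  have hnn' : (0:ℝ → ℝ) ≤ fun t => ‖u (Function.invFun α t)‖ ^ 2 * Real.exp (-2 * ϱ * t) :=
    fun t => by positivity
  have hcomp_int : Integrable
      (fun t : ℝ => ‖u (Function.invFun α t)‖ ^ 2 * Real.exp (-2 * ϱ * t)) := by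
    refine ⟨hcomp_sm, ?_⟩
    rw [hasFiniteIntegral_iff_ofReal (Filter.Eventually.of_forall hnn')]
    rwa [← hG_eq]
  refine ⟨⟨husm', hcomp_int⟩, ?_⟩
  · -- norm estimate
    have hwInt_c : wInt ϱ (fun t => u (Function.invFun α t)) = (∫⁻ t : ℝ, G t).toReal := by
      rw [wInt, integral_eq_lintegral_of_nonneg_ae (Filter.Eventually.of_forall hnn')
        hcomp_sm, hG_eq]
    rw [wNorm, wNorm, hwInt_c, hwInt_u, ← Real.sqrt_mul hM]
    apply Real.sqrt_le_sqrt
    have := ENNReal.toReal_mono (by finiteness) hmain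
    rwa [ENNReal.toReal_mul, ENNReal.toReal_ofReal hM] at this
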